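/- Suppose a sequence of IMCF solutions Σ_t^i satisfies: for a.e. t ∈ [0,T], ∫_{Σ_t^i}(2|∇H_i|²/H_i² + (λ₁^i − λ₂^i)² + R^i + 6) dμ → 0, ∫_{Σ_t^i}(H_i² − 4)dμ → 16π, and d/dt ∫_{Σ_t^i}(H_i² − 4)dμ → 0. Then for a.e. t, ∫_{Σ_t^i}(Rc^i(ν,ν) + 2) dμ → 0 and ∫_{Σ_t^i}(K₁₂^i + 1) dμ → 0, where K₁₂ = (R − 2Rc(ν,ν))/2 is the ambient sectional curvature tangent to Σ_t. -/
import Mathlib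

open Real Filter Topology

/-- At a (fixed, a.e.) time `t`, write for the sequence of IMCF solutions:
`G i = ∫ 2|∇H_i|²/H_i²`, `L i = ∫ (λ₁^i−λ₂^i)²`, `S i = ∫ (R^i+6)` (all nonnegative,
since `R ≥ −6`), `b i = ∫ (H_i²−4)`, `c i = d/dt ∫ (H_i²−4)`,
`RcInt i = ∫ (Rc^i(ν,ν)+2)`, `KInt i = ∫ (K₁₂^i+1)`.  The evolution identity gives
`c i = −G i − L i − 2 RcInt i` and the algebraic identity `K₁₂+1 = (1/2)(R+6) −
(Rc(ν,ν)+2)` gives `KInt i = (1/2) S i − RcInt i`.  If `G + L + S → 0`, `b → 16π`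
and `c → 0`, then `RcInt → 0` and `KInt → 0`. -/
theorem ricci_and_sectional_integrals_to_zero
    (G L S b c RcInt KInt : ℕ → ℝ)
    (hG : ∀ i, 0 ≤ G i) (hL : ∀ i, 0 ≤ L i) (hS : ∀ i, 0 ≤ S i)
    (hsum : Tendsto (fun i => G i + L i + S i) atTop (nhds 0))
    (hb : Tendsto b atTop (nhds (16 * π)))
    (hc : Tendsto c atTop (nhds 0))
    (hevol : ∀ i, c i = -G i - L i - 2 * RcInt i)
    (halg : ∀ i, KInt i = (1 / 2) * S i - RcInt i) :
    Tendsto RcInt atTop (nhds 0) ∧ Tendsto KInt atTop (nhds 0) := by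
  have hGz : Tendsto G atTop (nhds 0) := by
    refine tendsto_of_tendsto_of_tendsto_of_le_of_le tendsto_const_nhds hsum hG ?_
    intro i; simp only []; nlinarith [hL i, hS i]
  have hLz : Tendsto L atTop (nhds 0) := by
    refine tendsto_of_tendsto_of_tendsto_of_le_of_le tendsto_const_nhds hsum hL ?_
    intro i; simp only []; nlinarith [hG i, hS i]
  have hSz : Tendsto S atTop (nhds 0) := by
    refine tendsto_of_tendsto_of_tendsto_of_le_of_le tendsto_const_nhds hsum hS ?_
    intro i; simp only []; nlinarith [hG i, hL i]
  have hRc : Tendsto RcInt atTop (nhds 0) := by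
    have : Tendsto (fun i => (-c i - G i - L i) / 2) atTop (nhds 0) := by
      have := ((hc.neg.sub hGz).sub hLz).div_const 2
      simpa using this
    refine this.congr (fun i => ?_)
    have := hevol i; linarith
  refine ⟨hRc, ?_⟩
  have : Tendsto (fun i => (1 / 2) * S i - RcInt i) atTop (nhds 0) := by
    simpa using (hSz.const_mul (1/2 : ℝ)).sub hRc
  exact this.congr (fun i => (halg i).symm)
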